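/- Let d = 3, R the lower bidiagonal matrix with R_{ii} = 1, R_{i,i-1} = -1 (the tandem-queue reflection matrix), Σ with Σ_{ii} = c_{i-1} + c_i, Σ_{i,i-1} = Σ_{i-1,i} = -c_{i-1} for positive constants c_0,…,c_3, and μ_i = β_{i-1} - β_i with R⁻¹μ < 0. Define b = -R⁻¹μ and τ_i = 2b_i/(c_0 + c_i). Then θ^{(i,r)}_j = τ_i for j ≤ i and θ^{(i,r)}_j = 0 for j > i, where θ^{(i,r)} = Δ_i B^{(i)} as above. -/

import Mathlib

open Matrix

theorem theta_ray_three_station_tandem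
    (c0 c1 c2 c3 β0 β1 β2 β3 : ℝ)
    (hc0 : 0 < c0) (hc1 : 0 < c1) (hc2 : 0 < c2) (hc3 : 0 < c3)
    (R : Matrix (Fin 3) (Fin 3) ℝ) (hR : R = !![1, 0, 0; -1, 1, 0; 0, -1, 1])
    (S : Matrix (Fin 3) (Fin 3) ℝ)
    (hS : S = !![c0 + c1, -c1, 0; -c1, c1 + c2, -c2; 0, -c2, c2 + c3])
    (μ : Fin 3 → ℝ) (hμ : μ = ![β0 - β1, β1 - β2, β2 - β3])
    (hstab : ∀ i, (R⁻¹.mulVec μ) i < 0)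
    (b : Fin 3 → ℝ) (hb : b = -(R⁻¹.mulVec μ))
    (c : Fin 3 → ℝ) (hc : c = ![c1, c2, c3])
    (τ : Fin 3 → ℝ) (hτ : ∀ i, τ i = 2 * b i / (c0 + c i))
    (B : Fin 3 → Fin 3 → ℝ) (hB : ∀ i k, B i k = (R⁻¹)ᵀ k i)
    (Δ : Fin 3 → ℝ) (hΔ : ∀ i, Δ i = -2 * (μ ⬝ᵥ B i) / (B i ⬝ᵥ S.mulVec (B i)))
    (θr : Fin 3 → Fin 3 → ℝ) (hθr : ∀ i, θr i = Δ i • B i) :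
    ∀ i j : Fin 3, (j ≤ i → θr i j = τ i) ∧ (i < j → θr i j = 0) := by
  have hRinv : R⁻¹ = !![1, 0, 0; 1, 1, 0; 1, 1, 1] := by
    apply inv_eq_right_inv
    rw [hR, Matrix.mul_fin_three, Matrix.one_fin_three]
    norm_num
  have hBval : ∀ i k, B i k = !![1, 0, 0; 1, 1, 0; 1, 1, 1] i k := by
    intro i k
    rw [hB, hRinv, Matrix.transpose_apply]
  have hbval : ∀ i, b i = (-(!![(1:ℝ), 0, 0; 1, 1, 0; 1, 1, 1] *ᵥ μ)) i := by
    intro i; rw [hb, hRinv]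
  clear hstab hb hB hR
  subst hS hμ hc
  have h1 : c0 + c1 ≠ 0 := by positivity
  have h2 : c0 + c2 ≠ 0 := by positivity
  have h3 : c0 + c3 ≠ 0 := by positivity
  intro i j
  constructor
  · intro hij
    fin_cases i <;> fin_cases j <;>
      first
      | exact absurd hij (by decide)
      | (rw [hθr, Pi.smul_apply, smul_eq_mul, hΔ, hτ]
         simp only [hBval, hbval, Matrix.mulVec, dotProduct,
           Fin.sum_univ_three, Pi.neg_apply, Matrix.cons_val', Matrix.cons_val_zero,
           Matrix.cons_val_one, Matrix.head_cons, Matrix.empty_val',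
           Matrix.cons_val_fin_one, Matrix.head_fin_const, Matrix.cons_val_two,
           Matrix.tail_cons, Matrix.of_apply, Fin.zero_eta, Fin.mk_one, Fin.reduceFinMk, Fin.isValue]
         ring_nf)
  · intro hij
    fin_cases i <;> fin_cases j <;>
      first
      | exact absurd hij (by decide)
      | (rw [hθr, Pi.smul_apply, smul_eq_mul, hBval]
         norm_num)
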